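/- arXiv:0804.0326 — 2 statements merged into one kernel-verified Lean document; each statement's English description precedes it below -/
import Mathlib

section
/- A 𝒯-functor f: (X,a) → (Y,b) is left adjoint if and only if there exists a function g: Y → X such that b(Tf(𝔵), y) = a(𝔵, g(y)) for all 𝔵 ∈ TX and y ∈ Y, i.e. f_* = g^*. -/
universe u

namespace Paper

/-- A strict topological theory `𝒯 = (𝕋, V, ξ)`: a commutative unital quantale `V`
(a complete lattice with a commutative monoid structure whose multiplication preserves
suprema in each variable, with `⊥ < k`), a `Set`-monad `𝕋 = (T, e, m)` such that `T`
sends pullbacks to weak pullbacks and the naturality squares of `m` are weak pullbacks,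
and a `𝕋`-algebra structure `ξ : T V → V` for which `⊗` and `k` are `𝕋`-algebra
homomorphisms and `ξ_X := ξ ∘ T(-)` is a (monotone) natural transformation
`P_V → P_V T`. -/
structure TopTheory (V : Type u) [CompleteLattice V] (T : Type u → Type u) where
  tens : V → V → V
  unit : V
  tens_comm : ∀ u v : V, tens u v = tens v u
  tens_assoc : ∀ u v w : V, tens (tens u v) w = tens u (tens v w)
  unit_tens : ∀ v : V, tens unit v = v
  tens_sSup : ∀ (u : V) (S : Set V), tens u (sSup S) = ⨆ v ∈ S, tens u v
  bot_lt_unit : (⊥ : V) < unit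
  map : ∀ {X Y : Type u}, (X → Y) → T X → T Y
  map_id : ∀ {X : Type u}, map (id : X → X) = id
  map_comp : ∀ {X Y Z : Type u} (g : Y → Z) (f : X → Y) (𝔵 : T X),
    map (g ∘ f) 𝔵 = map g (map f 𝔵)
  e : ∀ {X : Type u}, X → T X
  m : ∀ {X : Type u}, T (T X) → T X
  e_nat : ∀ {X Y : Type u} (f : X → Y) (x : X), map f (e x) = e (f x)
  m_nat : ∀ {X Y : Type u} (f : X → Y) (𝔛 : T (T X)), map f (m 𝔛) = m (map (map f) 𝔛)
  m_e : ∀ {X : Type u} (𝔵 : T X), m (e 𝔵) = 𝔵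
  m_map_e : ∀ {X : Type u} (𝔵 : T X), m (map e 𝔵) = 𝔵
  m_assoc : ∀ {X : Type u} (𝔜 : T (T (T X))), m (m 𝔜) = m (map m 𝔜)
  /-- (BC): `T` sends pullbacks to weak pullbacks. -/
  map_bc : ∀ {X Y Z : Type u} (f : X → Z) (g : Y → Z) (𝔵 : T X) (𝔶 : T Y),
    map f 𝔵 = map g 𝔶 →
    ∃ 𝔴 : T {p : X × Y // f p.1 = g p.2},
      map (fun p => p.1.1) 𝔴 = 𝔵 ∧ map (fun p => p.1.2) 𝔴 = 𝔶
  /-- (BC): every naturality square of `m` is a weak pullback. -/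
  m_bc : ∀ {X Y : Type u} (f : X → Y) (𝔜 : T (T Y)) (𝔵 : T X),
    m 𝔜 = map f 𝔵 → ∃ 𝔛 : T (T X), map (map f) 𝔛 = 𝔜 ∧ m 𝔛 = 𝔵
  xi : T V → V
  xi_e : ∀ v : V, xi (e v) = v
  xi_m : ∀ 𝔙 : T (T V), xi (m 𝔙) = xi (map xi 𝔙)
  /-- `k : 1 → V` is a `𝕋`-algebra homomorphism. -/
  xi_unit : ∀ {X : Type u} (𝔵 : T X), xi (map (fun _ => unit) 𝔵) = unit
  /-- `⊗ : V × V → V` is a `𝕋`-algebra homomorphism. -/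
  xi_tens : ∀ 𝔴 : T (V × V),
    xi (map (fun p => tens p.1 p.2) 𝔴) = tens (xi (map Prod.fst 𝔴)) (xi (map Prod.snd 𝔴))
  /-- each component `ξ_X : V^X → V^{T X}` is monotone. -/
  xi_mono : ∀ {X : Type u} (φ φ' : X → V), (∀ x, φ x ≤ φ' x) →
    ∀ 𝔵 : T X, xi (map φ 𝔵) ≤ xi (map φ' 𝔵)
  /-- `ξ_X` is a natural transformation `P_V → P_V T`. -/
  xi_nat : ∀ {X Y : Type u} (f : X → Y) (φ : X → V) (𝔶 : T Y),
    (⨆ 𝔵 : {𝔵 : T X // map f 𝔵 = 𝔶}, xi (map φ 𝔵.1)) =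
      xi (map (fun y => ⨆ x : {x : X // f x = y}, φ x.1) 𝔶)

namespace TopTheory

variable {V : Type u} [CompleteLattice V] {T : Type u → Type u}

/-- The internal hom of the quantale: `u ⊗ (-) ⊣ hom (u, -)`. -/
def ihom (𝒯 : TopTheory V T) (u w : V) : V := sSup {z | 𝒯.tens u z ≤ w}

/-- The extension `T_ξ` of `T : Set → Set` to `V`-relations. -/
def Txi (𝒯 : TopTheory V T) {X Y : Type u} (r : X → Y → V) (𝔵 : T X) (𝔶 : T Y) : V :=
  ⨆ 𝔴 : {w : T (X × Y) // 𝒯.map Prod.fst w = 𝔵 ∧ 𝒯.map Prod.snd w = 𝔶},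
    𝒯.xi (𝒯.map (fun p => r p.1 p.2) 𝔴.1)

/-- Kleisli convolution `β ∘ α = β · T_ξ α · m_X°` of `𝒯`-relations
`α : X ⇸ Y` and `β : Y ⇸ Z`. -/
def kleisli (𝒯 : TopTheory V T) {X Y Z : Type u}
    (β : T Y → Z → V) (α : T X → Y → V) (𝔵 : T X) (z : Z) : V :=
  ⨆ 𝔛 : {𝔛 : T (T X) // 𝒯.m 𝔛 = 𝔵}, ⨆ 𝔶 : T Y, 𝒯.tens (𝒯.Txi α 𝔛.1 𝔶) (β 𝔶 z)

/-- The `𝒯`-relation `e_X° : X ⇸ X`. -/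
def unitRel (𝒯 : TopTheory V T) (X : Type u) (𝔵 : T X) (x : X) : V :=
  ⨆ _ : 𝔵 = 𝒯.e x, 𝒯.unit

/-- A `𝒯`-category structure on `X`: a `𝒯`-relation `a : X ⇸ X` with
`e_X° ≤ a` and `a ∘ a ≤ a`. -/
structure TCatStr (𝒯 : TopTheory V T) (X : Type u) where
  rel : T X → X → V
  le_refl : ∀ x : X, 𝒯.unit ≤ rel (𝒯.e x) x
  comp : ∀ (𝔵 : T X) (x : X), 𝒯.kleisli rel rel 𝔵 x ≤ rel 𝔵 x

/-- The `𝒯`-module conditions `φ ∘ a ≤ φ` and `b ∘ φ ≤ φ` for a `𝒯`-relation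
`φ : X ⇸ Y` between (structures underlying) `𝒯`-categories `(X,a)` and `(Y,b)`. -/
def IsTModRel (𝒯 : TopTheory V T) {X Y : Type u}
    (a : T X → X → V) (b : T Y → Y → V) (φ : T X → Y → V) : Prop :=
  (∀ 𝔵 y, 𝒯.kleisli φ a 𝔵 y ≤ φ 𝔵 y) ∧ (∀ 𝔵 y, 𝒯.kleisli b φ 𝔵 y ≤ φ 𝔵 y)

variable {𝒯 : TopTheory V T}

/-- `f_* = b · T f`. -/
def modStar {X Y : Type u} (b : 𝒯.TCatStr Y) (f : X → Y) (𝔵 : T X) (y : Y) : V :=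
  b.rel (𝒯.map f 𝔵) y

/-- `f^* = f° · b`. -/
def modCostar {X Y : Type u} (b : 𝒯.TCatStr Y) (f : X → Y) (𝔶 : T Y) (x : X) : V :=
  b.rel 𝔶 (f x)

/-- The extension `φ ⟜ ψ` of `φ : X ⇸∘ Y` along `ψ : X ⇸∘ Z`, given by
`(φ ⟜ ψ)(𝔷,y) = ⋀_{𝔵 ∈ T X} hom((T_ξ ψ · m_X°)(𝔵,𝔷), φ(𝔵,y))`. -/
def extend (𝒯 : TopTheory V T) {X Y Z : Type u}
    (φ : T X → Y → V) (ψ : T X → Z → V) (𝔷 : T Z) (y : Y) : V :=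
  ⨅ 𝔵 : T X, 𝒯.ihom (⨆ 𝔛 : {𝔛 : T (T X) // 𝒯.m 𝔛 = 𝔵}, 𝒯.Txi ψ 𝔛.1 𝔷) (φ 𝔵 y)

/-- A `𝒯`-functor `f : (X,a) → (Y,b)`. -/
def IsTFunctor {X Y : Type u} (a : 𝒯.TCatStr X) (b : 𝒯.TCatStr Y) (f : X → Y) : Prop :=
  ∀ (𝔵 : T X) (x : X), a.rel 𝔵 x ≤ b.rel (𝒯.map f 𝔵) (f x)

/-- A fully faithful `𝒯`-functor. -/
def FullyFaithful {X Y : Type u} (a : 𝒯.TCatStr X) (b : 𝒯.TCatStr Y) (f : X → Y) : Prop :=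
  ∀ (𝔵 : T X) (x : X), a.rel 𝔵 x = b.rel (𝒯.map f 𝔵) (f x)

/-- The order `f ≤ g ⟺ f^* ≤ g^*` on `𝒯`-functors `X → (Y,b)`. -/
def funLE {X Y : Type u} (b : 𝒯.TCatStr Y) (f g : X → Y) : Prop :=
  ∀ (𝔶 : T Y) (x : X), b.rel 𝔶 (f x) ≤ b.rel 𝔶 (g x)

/-- Equivalence `f ≅ g ⟺ f^* = g^*` of `𝒯`-functors `X → (Y,b)`. -/
def FunEquiv {X Y : Type u} (b : 𝒯.TCatStr Y) (f g : X → Y) : Prop :=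
  ∀ (𝔶 : T Y) (x : X), b.rel 𝔶 (f x) = b.rel 𝔶 (g x)

/-- `f ⊣ g`:  `1_X ≤ g·f` and `f·g ≤ 1_Y`. -/
def IsAdjunction {X Y : Type u} (a : 𝒯.TCatStr X) (b : 𝒯.TCatStr Y)
    (f : X → Y) (g : Y → X) : Prop :=
  (∀ (𝔵 : T X) (x : X), a.rel 𝔵 x ≤ a.rel 𝔵 (g (f x))) ∧
    (∀ (𝔶 : T Y) (y : Y), b.rel 𝔶 (f (g y)) ≤ b.rel 𝔶 y)

/-- A left adjoint `𝒯`-functor. -/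
def IsLeftAdjoint {X Y : Type u} (a : 𝒯.TCatStr X) (b : 𝒯.TCatStr Y) (f : X → Y) : Prop :=
  IsTFunctor a b f ∧ ∃ g : Y → X, IsTFunctor b a g ∧ IsAdjunction a b f g

/-- L-separatedness: equivalent `𝒯`-functors into `X` are equal. -/
def Separated {X : Type u} (a : 𝒯.TCatStr X) : Prop :=
  ∀ (A : Type u) (as : 𝒯.TCatStr A) (f g : A → X),
    IsTFunctor as a f → IsTFunctor as a g → FunEquiv a f g → f = g

/-- Injectivity with respect to fully faithful `𝒯`-functors. -/
def Injective {X : Type u} (a : 𝒯.TCatStr X) : Prop :=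
  ∀ (A B : Type u) (as : 𝒯.TCatStr A) (bs : 𝒯.TCatStr B) (f : A → X) (i : A → B),
    IsTFunctor as a f → IsTFunctor as bs i → FullyFaithful as bs i →
      ∃ g : B → X, IsTFunctor bs a g ∧ FunEquiv a (g ∘ i) f

/-- `g : Z → X` is the `ψ`-weighted colimit of `h : A → X`, i.e. `g_* = h_* ⟜ ψ`. -/
def IsColimit {X A Z : Type u} (a : 𝒯.TCatStr X) (h : A → X) (ψ : T A → Z → V)
    (g : Z → X) : Prop :=
  ∀ (𝔷 : T Z) (x : X), modStar a g 𝔷 x = 𝒯.extend (modStar a h) ψ 𝔷 x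

/-- Cocompleteness: every weighted diagram has a colimit. -/
def Cocomplete {X : Type u} (a : 𝒯.TCatStr X) : Prop :=
  ∀ (A Z : Type u) (as : 𝒯.TCatStr A) (cs : 𝒯.TCatStr Z) (h : A → X),
    IsTFunctor as a h → ∀ ψ : T A → Z → V, 𝒯.IsTModRel as.rel cs.rel ψ →
      ∃ g : Z → X, IsTFunctor cs a g ∧ IsColimit a h ψ g

/-- Cocontinuity: preservation of all weighted colimits. -/
def Cocontinuous {X Y : Type u} (a : 𝒯.TCatStr X) (b : 𝒯.TCatStr Y) (f : X → Y) : Prop :=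
  ∀ (A Z : Type u) (as : 𝒯.TCatStr A) (cs : 𝒯.TCatStr Z) (h : A → X)
    (ψ : T A → Z → V) (g : Z → X),
    IsTFunctor as a h → 𝒯.IsTModRel as.rel cs.rel ψ → IsTFunctor cs a g →
      IsColimit a h ψ g → IsColimit b (f ∘ h) ψ (f ∘ g)

/-- A presheaf on `(X,a)`: a `𝒯`-module `X ⇸∘ G`, where `G = (1, e_1°)`. -/
def IsPresheaf {X : Type u} (a : 𝒯.TCatStr X) (ψ : T X → V) : Prop :=
  𝒯.IsTModRel a.rel (𝒯.unitRel PUnit) (fun 𝔵 _ => ψ 𝔵)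

/-- The underlying set of the presheaf `𝒯`-category `X̂`. -/
def Hat {X : Type u} (a : 𝒯.TCatStr X) : Type u := {ψ : T X → V // IsPresheaf a ψ}

/-- The `𝒯`-category structure `⟦-,-⟧` of `V^{|X|}`. -/
def powRel (𝒯 : TopTheory V T) (X : Type u) (𝔭 : T (T X → V)) (ψ : T X → V) : V :=
  ⨅ 𝔮 : {q : T ((T X) × (T X → V)) // 𝒯.map Prod.snd q = 𝔭},
    𝒯.ihom (𝒯.xi (𝒯.map (fun p => p.2 p.1) 𝔮.1)) (ψ (𝒯.m (𝒯.map Prod.fst 𝔮.1)))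

/-- `hs` is the `𝒯`-category structure on `X̂` inherited from `V^{|X|}`. -/
def IsHatStr {X : Type u} (a : 𝒯.TCatStr X) (hs : 𝒯.TCatStr (Hat a)) : Prop :=
  ∀ (𝔭 : T (Hat a)) (ψ : Hat a), hs.rel 𝔭 ψ = 𝒯.powRel X (𝒯.map Subtype.val 𝔭) ψ.1

/-- `y` is the Yoneda functor `X → X̂`, `y x = a(-,x)`. -/
def IsYoneda {X : Type u} (a : 𝒯.TCatStr X) (y : X → Hat a) : Prop :=
  ∀ (x : X) (𝔵 : T X), (y x).1 𝔵 = a.rel 𝔵 x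

/-- The underlying map `ψ ↦ ψ ∘ f^*` of `f̂ : X̂ → Ŷ`. -/
def hatMapRel {X Y : Type u} (b : 𝒯.TCatStr Y) (f : X → Y) (ψ : T X → V) (𝔶 : T Y) : V :=
  𝒯.kleisli (fun 𝔵 (_ : PUnit.{u + 1}) => ψ 𝔵) (modCostar b f) 𝔶 PUnit.unit

/-- `fh` is the `𝒯`-functor `f̂ : X̂ → Ŷ`, with underlying map `ψ ↦ ψ ∘ f^*`. -/
def IsHatMap {X Y : Type u} (a : 𝒯.TCatStr X) (b : 𝒯.TCatStr Y) (f : X → Y)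
    (fh : Hat a → Hat b) : Prop :=
  ∀ (ψ : Hat a) (𝔶 : T Y), (fh ψ).1 𝔶 = hatMapRel b f ψ.1 𝔶

/-- An inhabited `𝒯`-module: `k ≤ ⋀_y ⋁_𝔵 φ(𝔵,y)`. -/
def InhabitedMod (𝒯 : TopTheory V T) {X Y : Type u} (φ : T X → Y → V) : Prop :=
  𝒯.unit ≤ ⨅ y : Y, ⨆ 𝔵 : T X, φ 𝔵 y

/-- A dense `𝒯`-functor: `f_*` is inhabited. -/
def Dense {X Y : Type u} (b : 𝒯.TCatStr Y) (f : X → Y) : Prop :=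
  𝒯.InhabitedMod (modStar b f)

/-- The underlying set of `X⁺ = {ψ ∈ X̂ ∣ ψ inhabited}`. -/
def Plus {X : Type u} (a : 𝒯.TCatStr X) : Type u :=
  {ψ : Hat a // 𝒯.InhabitedMod (fun 𝔵 (_ : PUnit.{u + 1}) => ψ.1 𝔵)}

/-- `ps` is the `𝒯`-category structure on `X⁺` inherited from `X̂`. -/
def IsPlusStr {X : Type u} (a : 𝒯.TCatStr X) (hs : 𝒯.TCatStr (Hat a))
    (ps : 𝒯.TCatStr (Plus a)) : Prop :=
  ∀ (𝔭 : T (Plus a)) (ψ : Plus a), ps.rel 𝔭 ψ = hs.rel (𝒯.map Subtype.val 𝔭) ψ.1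

/-- Inhabited-cocompleteness: all colimits with inhabited weights exist. -/
def ICocomplete {X : Type u} (a : 𝒯.TCatStr X) : Prop :=
  ∀ (A Z : Type u) (as : 𝒯.TCatStr A) (cs : 𝒯.TCatStr Z) (h : A → X),
    IsTFunctor as a h → ∀ ψ : T A → Z → V, 𝒯.IsTModRel as.rel cs.rel ψ →
      𝒯.InhabitedMod ψ → ∃ g : Z → X, IsTFunctor cs a g ∧ IsColimit a h ψ g

/-- Inhabited-cocontinuity: preservation of all colimits with inhabited weights. -/
def ICocontinuous {X Y : Type u} (a : 𝒯.TCatStr X) (b : 𝒯.TCatStr Y) (f : X → Y) : Prop :=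
  ∀ (A Z : Type u) (as : 𝒯.TCatStr A) (cs : 𝒯.TCatStr Z) (h : A → X)
    (ψ : T A → Z → V) (g : Z → X),
    IsTFunctor as a h → 𝒯.IsTModRel as.rel cs.rel ψ → 𝒯.InhabitedMod ψ →
      IsTFunctor cs a g → IsColimit a h ψ g → IsColimit b (f ∘ h) ψ (f ∘ g)


lemma tens_unit_right (𝒯 : TopTheory V T) (v : V) : 𝒯.tens v 𝒯.unit = v := by
  rw [𝒯.tens_comm]; exact 𝒯.unit_tens v

lemma tens_le_tens_left (𝒯 : TopTheory V T) {v v' : V} (u : V) (h : v ≤ v') :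
    𝒯.tens u v ≤ 𝒯.tens u v' := by
  have h2 : 𝒯.tens u v' = 𝒯.tens u (sSup ({v, v'} : Set V)) := by
    rw [sSup_pair, sup_eq_right.mpr h]
  rw [h2, 𝒯.tens_sSup]
  exact le_trans le_rfl (le_iSup_of_le v (le_iSup_of_le (by simp) le_rfl))

lemma tens_le_tens (𝒯 : TopTheory V T) {u u' v v' : V} (hu : u ≤ u') (hv : v ≤ v') :
    𝒯.tens u v ≤ 𝒯.tens u' v' := by
  refine le_trans (𝒯.tens_le_tens_left u hv) ?_
  rw [𝒯.tens_comm u v', 𝒯.tens_comm u' v']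
  exact 𝒯.tens_le_tens_left v' hu

lemma unit_le_Txi (𝒯 : TopTheory V T) {X Y Z : Type u} (r : X → Y → V)
    (p : Z → X) (q : Z → Y) (𝔷 : T Z) (h : ∀ z, 𝒯.unit ≤ r (p z) (q z)) :
    𝒯.unit ≤ 𝒯.Txi r (𝒯.map p 𝔷) (𝒯.map q 𝔷) := by
  have hw : 𝒯.map Prod.fst (𝒯.map (fun z => (p z, q z)) 𝔷) = 𝒯.map p 𝔷 ∧
      𝒯.map Prod.snd (𝒯.map (fun z => (p z, q z)) 𝔷) = 𝒯.map q 𝔷 := by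
    constructor <;> rw [← 𝒯.map_comp] <;> rfl
  have key : 𝒯.xi (𝒯.map (fun pr : X × Y => r pr.1 pr.2)
      (𝒯.map (fun z => (p z, q z)) 𝔷)) ≤ 𝒯.Txi r (𝒯.map p 𝔷) (𝒯.map q 𝔷) :=
    le_iSup (fun 𝔴 : {w : T (X × Y) //
      𝒯.map Prod.fst w = 𝒯.map p 𝔷 ∧ 𝒯.map Prod.snd w = 𝒯.map q 𝔷} =>
      𝒯.xi (𝒯.map (fun pr : X × Y => r pr.1 pr.2) 𝔴.1)) ⟨_, hw⟩
  refine le_trans ?_ key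
  rw [← 𝒯.map_comp]
  calc 𝒯.unit = 𝒯.xi (𝒯.map (fun _ => 𝒯.unit) 𝔷) := (𝒯.xi_unit 𝔷).symm
    _ ≤ _ := 𝒯.xi_mono _ _ (fun z => h z) 𝔷

lemma le_Txi_e (𝒯 : TopTheory V T) {X Y : Type u} (r : X → Y → V) (x : X) (y : Y) :
    r x y ≤ 𝒯.Txi r (𝒯.e x) (𝒯.e y) := by
  have hw : 𝒯.map Prod.fst (𝒯.e (x, y)) = 𝒯.e x ∧
      𝒯.map Prod.snd (𝒯.e (x, y)) = 𝒯.e y := by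
    constructor <;> rw [𝒯.e_nat]
  have key : 𝒯.xi (𝒯.map (fun pr : X × Y => r pr.1 pr.2) (𝒯.e (x, y))) ≤
      𝒯.Txi r (𝒯.e x) (𝒯.e y) :=
    le_iSup (fun 𝔴 : {w : T (X × Y) //
      𝒯.map Prod.fst w = 𝒯.e x ∧ 𝒯.map Prod.snd w = 𝒯.e y} =>
      𝒯.xi (𝒯.map (fun pr : X × Y => r pr.1 pr.2) 𝔴.1)) ⟨_, hw⟩
  refine le_trans ?_ key
  rw [𝒯.e_nat, 𝒯.xi_e]

lemma step {X : Type u} (a : 𝒯.TCatStr X) {𝔛 : T (T X)} {𝔵 : T X} (h : 𝒯.m 𝔛 = 𝔵)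
    (𝔶 : T X) (x : X) :
    𝒯.tens (𝒯.Txi a.rel 𝔛 𝔶) (a.rel 𝔶 x) ≤ a.rel 𝔵 x := by
  refine le_trans ?_ (a.comp 𝔵 x)
  exact le_trans (le_iSup (fun 𝔶' => 𝒯.tens (𝒯.Txi a.rel 𝔛 𝔶') (a.rel 𝔶' x)) 𝔶)
    (le_iSup (fun 𝔜 : {𝔜 : T (T X) // 𝒯.m 𝔜 = 𝔵} =>
      ⨆ 𝔶', 𝒯.tens (𝒯.Txi a.rel 𝔜.1 𝔶') (a.rel 𝔶' x)) ⟨𝔛, h⟩)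

/-- Proposition 2.1. A `𝒯`-functor `f : (X,a) → (Y,b)` is left
adjoint if and only if there exists a function `g : Y → X` such that
`b(Tf(𝔵), y) = a(𝔵, g(y))` for all `𝔵 ∈ T X`, `y ∈ Y`, i.e. `f_* = g^*`. -/
theorem statement12 (𝒯 : TopTheory V T) {X Y : Type u}
    (a : 𝒯.TCatStr X) (b : 𝒯.TCatStr Y) (f : X → Y) (hf : IsTFunctor a b f) :
    IsLeftAdjoint a b f ↔
      ∃ g : Y → X, ∀ (𝔵 : T X) (y : Y), b.rel (𝒯.map f 𝔵) y = a.rel 𝔵 (g y) := by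
  constructor
  · rintro ⟨-, g, hg, hη, hε⟩
    refine ⟨g, fun 𝔵 y => le_antisymm ?_ ?_⟩
    · -- b(Tf 𝔵, y) ≤ a(𝔵, g y)
      have h1 : 𝒯.unit ≤ 𝒯.Txi a.rel (𝒯.map 𝒯.e 𝔵) (𝒯.map (fun x => g (f x)) 𝔵) :=
        𝒯.unit_le_Txi a.rel 𝒯.e (fun x => g (f x)) 𝔵
          (fun x => le_trans (a.le_refl x) (hη (𝒯.e x) x))
      have h2 : b.rel (𝒯.map f 𝔵) y ≤ a.rel (𝒯.map (fun x => g (f x)) 𝔵) (g y) := by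
        have := hg (𝒯.map f 𝔵) y
        rwa [← 𝒯.map_comp g f 𝔵] at this
      calc b.rel (𝒯.map f 𝔵) y
          = 𝒯.tens 𝒯.unit (b.rel (𝒯.map f 𝔵) y) := (𝒯.unit_tens _).symm
        _ ≤ 𝒯.tens (𝒯.Txi a.rel (𝒯.map 𝒯.e 𝔵) (𝒯.map (fun x => g (f x)) 𝔵))
            (a.rel (𝒯.map (fun x => g (f x)) 𝔵) (g y)) := 𝒯.tens_le_tens h1 h2
        _ ≤ a.rel 𝔵 (g y) := step a (𝒯.m_map_e 𝔵) _ (g y)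
    · -- a(𝔵, g y) ≤ b(Tf 𝔵, y)
      exact le_trans (hf 𝔵 (g y)) (hε (𝒯.map f 𝔵) y)
  · rintro ⟨g, heq⟩
    have hbe : ∀ y : Y, 𝒯.unit ≤ b.rel (𝒯.e (f (g y))) y := fun y => by
      have h := heq (𝒯.e (g y)) y
      rw [𝒯.e_nat] at h
      rw [h]; exact a.le_refl (g y)
    have hgfun : IsTFunctor b a g := by
      intro 𝔶 y
      rw [← heq (𝒯.map g 𝔶) y, ← 𝒯.map_comp f g 𝔶]
      have h1 : 𝒯.unit ≤ 𝒯.Txi b.rel (𝒯.map (fun y' => 𝒯.e (f (g y'))) 𝔶) 𝔶 := by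
        have := 𝒯.unit_le_Txi b.rel (fun y' => 𝒯.e (f (g y'))) id 𝔶 (fun y' => hbe y')
        rwa [𝒯.map_id] at this
      have hm : 𝒯.m (𝒯.map (fun y' => 𝒯.e (f (g y'))) 𝔶) = 𝒯.map (f ∘ g) 𝔶 := by
        have : 𝒯.map (fun y' => 𝒯.e (f (g y'))) 𝔶 = 𝒯.map 𝒯.e (𝒯.map (f ∘ g) 𝔶) := by
          rw [← 𝒯.map_comp]; rfl
        rw [this, 𝒯.m_map_e]
      calc b.rel 𝔶 y = 𝒯.tens 𝒯.unit (b.rel 𝔶 y) := (𝒯.unit_tens _).symm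
        _ ≤ 𝒯.tens (𝒯.Txi b.rel (𝒯.map (fun y' => 𝒯.e (f (g y'))) 𝔶) 𝔶)
            (b.rel 𝔶 y) := 𝒯.tens_le_tens h1 le_rfl
        _ ≤ b.rel (𝒯.map (f ∘ g) 𝔶) y := step b hm 𝔶 y
    refine ⟨hf, g, hgfun, fun 𝔵 x => ?_, fun 𝔶 y => ?_⟩
    · rw [← heq 𝔵 (f x)]; exact hf 𝔵 x
    · calc b.rel 𝔶 (f (g y))
          = 𝒯.tens (b.rel 𝔶 (f (g y))) 𝒯.unit := (𝒯.tens_unit_right _).symm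
        _ ≤ 𝒯.tens (𝒯.Txi b.rel (𝒯.e 𝔶) (𝒯.e (f (g y))))
            (b.rel (𝒯.e (f (g y))) y) :=
          𝒯.tens_le_tens (𝒯.le_Txi_e b.rel 𝔶 (f (g y))) (hbe y)
        _ ≤ b.rel 𝔶 y := step b (𝒯.m_e 𝔶) _ y

end TopTheory

end Paper
end

section
/- Every left adjoint 𝒯-functor f: X → Y between 𝒯-categories is cocontinuous: if g ≅ colim(ψ, h) exists for a 𝒯-functor h: A → X and weight ψ: A ⇸∘ B, then f·g ≅ colim(ψ, f·h). -/
universe u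

namespace Paper

namespace TopTheory

variable {V : Type u} [CompleteLattice V] {T : Type u → Type u}

variable {𝒯 : TopTheory V T}

lemma tens_mono_right (𝒯 : TopTheory V T) {u v v' : V} (h : v ≤ v') :
    𝒯.tens u v ≤ 𝒯.tens u v' := by
  have hs : sSup {v, v'} = v' := by
    rw [sSup_pair, sup_eq_right.mpr h]
  calc 𝒯.tens u v ≤ ⨆ w ∈ ({v, v'} : Set V), 𝒯.tens u w := by
        apply le_biSup _ (by simp : v ∈ ({v, v'} : Set V))
    _ = 𝒯.tens u (sSup {v, v'}) := (𝒯.tens_sSup u _).symm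
    _ = 𝒯.tens u v' := by rw [hs]

lemma tens_mono_left (𝒯 : TopTheory V T) {u u' v : V} (h : u ≤ u') :
    𝒯.tens u v ≤ 𝒯.tens u' v := by
  rw [𝒯.tens_comm u v, 𝒯.tens_comm u' v]; exact 𝒯.tens_mono_right h

/-- The mate identity: for an adjunction `f ⊣ g'`, `f_* = g'^*`. -/
lemma mate (𝒯 : TopTheory V T) {X Y : Type u}
    (a : 𝒯.TCatStr X) (b : 𝒯.TCatStr Y) (f : X → Y) (g' : Y → X)
    (hf : IsTFunctor a b f) (hg' : IsTFunctor b a g')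
    (hadj : IsAdjunction a b f g') (𝔵 : T X) (y : Y) :
    b.rel (𝒯.map f 𝔵) y = a.rel 𝔵 (g' y) := by
  apply le_antisymm
  · -- b(Tf𝔵, y) ≤ a(T(g'∘f)𝔵, g'y) ≤ a(𝔵, g'y)
    have h1 : b.rel (𝒯.map f 𝔵) y ≤ a.rel (𝒯.map (g' ∘ f) 𝔵) (g' y) := by
      rw [𝒯.map_comp]; exact hg' _ y
    refine h1.trans ?_
    -- use composition with 𝔛 = map e 𝔵 and intermediate 𝔶 = map (g'∘f) 𝔵
    refine le_trans ?_ (a.comp 𝔵 (g' y))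
    unfold kleisli
    refine le_iSup_of_le ⟨𝒯.map 𝒯.e 𝔵, 𝒯.m_map_e 𝔵⟩ ?_
    refine le_iSup_of_le (𝒯.map (g' ∘ f) 𝔵) ?_
    have hT : 𝒯.unit ≤ 𝒯.Txi a.rel (𝒯.map 𝒯.e 𝔵) (𝒯.map (g' ∘ f) 𝔵) := by
      unfold Txi
      refine le_iSup_of_le ⟨𝒯.map (fun x => (𝒯.e x, g' (f x))) 𝔵, ?_, ?_⟩ ?_
      · rw [← 𝒯.map_comp]; rfl
      · rw [← 𝒯.map_comp]; rfl
      · rw [← 𝒯.map_comp]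
        calc 𝒯.unit = 𝒯.xi (𝒯.map (fun _ => 𝒯.unit) 𝔵) := (𝒯.xi_unit 𝔵).symm
          _ ≤ _ := 𝒯.xi_mono _ _
              (fun x => le_trans (a.le_refl x) (hadj.1 (𝒯.e x) x)) 𝔵
    calc a.rel (𝒯.map (g' ∘ f) 𝔵) (g' y)
        = 𝒯.tens 𝒯.unit (a.rel (𝒯.map (g' ∘ f) 𝔵) (g' y)) := (𝒯.unit_tens _).symm
      _ ≤ _ := 𝒯.tens_mono_left hT
  · exact le_trans (hf 𝔵 (g' y)) (hadj.2 (𝒯.map f 𝔵) y)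

/-- Proposition 2.3(2). Every left adjoint `𝒯`-functor
`f : X → Y` is cocontinuous: if `g ≅ colim(ψ, h)` exists for a `𝒯`-functor
`h : A → X` and weight `ψ : A ⇸∘ B`, then `f·g ≅ colim(ψ, f·h)`. -/
theorem statement14 (𝒯 : TopTheory V T) {X Y : Type u}
    (a : 𝒯.TCatStr X) (b : 𝒯.TCatStr Y) (f : X → Y) (hf : IsLeftAdjoint a b f)
    {A B : Type u} (as : 𝒯.TCatStr A) (bs : 𝒯.TCatStr B)
    (h : A → X) (hh : IsTFunctor as a h)
    (ψ : T A → B → V) (hψ : 𝒯.IsTModRel as.rel bs.rel ψ)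
    (g : B → X) (hg : IsTFunctor bs a g) (hcol : IsColimit a h ψ g) :
    IsColimit b (f ∘ h) ψ (f ∘ g) := by
  obtain ⟨hff, g', hg', hadj⟩ := hf
  intro 𝔷 y
  unfold modStar extend
  have hfg : 𝒯.map (f ∘ g) 𝔷 = 𝒯.map f (𝒯.map g 𝔷) := 𝒯.map_comp f g 𝔷
  rw [hfg, 𝒯.mate a b f g' hff hg' hadj]
  have := hcol 𝔷 (g' y)
  unfold modStar extend at this
  rw [this]
  congr 1; funext 𝔞; congr 1
  show a.rel (𝒯.map h 𝔞) (g' y) = b.rel (𝒯.map (f ∘ h) 𝔞) y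
  rw [𝒯.map_comp f h 𝔞, 𝒯.mate a b f g' hff hg' hadj]

end TopTheory

end Paper
end
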